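/- Let a < b ≤ ∞ and let φ, σ, S : (a,b) → ℝ be functions with φ(x) > 0, φ′(x) < 0, σ(x) > 0 and S(x) > 0 for all x ∈ (a,b). Let I, J : (a,b) → ℝ be differentiable and satisfy J′(x) = −I′(x)·φ(x) for all x ∈ (a,b). Define L(x) := σ(x)²·φ′(x)²·I′(x)/(2·S(x)) and suppose L is differentiable with L′(x) > 0 for x ∈ (a,x*) and L′(x) < 0 for x ∈ (x*,b) for some x* ∈ (a,b), that L(x) → 0 as x → b from the left, and that L(x₀) < 0 for some x₀ ∈ (a,b). Then there exists a unique x̂ ∈ (a,x*) such that I′(x) < 0 and J′(x) > 0 for all x ∈ (a,x̂), and I′(x) > 0 and J′(x) < 0 for all x ∈ (x̂,b). If in addition there is z* ∈ (a,b) with I(x) < 0 for x ∈ (a,z*) and I(x) > 0 for x ∈ (z*,b), then x̂ < z*. -/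

import Mathlib

open Set Filter Topology

private lemma myStrictMonoOn {f f' : ℝ → ℝ} {u v : ℝ}
    (hd : ∀ x ∈ Icc u v, HasDerivAt f (f' x) x) (hpos : ∀ x ∈ Ioo u v, 0 < f' x) :
    StrictMonoOn f (Icc u v) := by
  apply strictMonoOn_of_deriv_pos (convex_Icc u v)
  · exact fun x hx => (hd x hx).continuousAt.continuousWithinAt
  · intro x hx
    rw [interior_Icc] at hx
    rw [(hd x (Ioo_subset_Icc_self hx)).deriv]
    exact hpos x hx

private lemma myStrictAntiOn {f f' : ℝ → ℝ} {u v : ℝ}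
    (hd : ∀ x ∈ Icc u v, HasDerivAt f (f' x) x) (hneg : ∀ x ∈ Ioo u v, f' x < 0) :
    StrictAntiOn f (Icc u v) := by
  apply strictAntiOn_of_deriv_neg (convex_Icc u v)
  · exact fun x hx => (hd x hx).continuousAt.continuousWithinAt
  · intro x hx
    rw [interior_Icc] at hx
    rw [(hd x (Ioo_subset_Icc_self hx)).deriv]
    exact hneg x hx

/-- Lemma 4 of the paper: shape of the auxiliary functions `I` and `J`. -/
theorem stmt0
    (a : ℝ) (b : EReal) (hab : (a : EReal) < b)
    (φ φ' σ S I I' J J' L L' : ℝ → ℝ)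
    (xstar : ℝ) (hxstar : a < xstar ∧ (xstar : EReal) < b)
    (hφpos : ∀ x, a < x → (x : EReal) < b → 0 < φ x)
    (hφd : ∀ x, a < x → (x : EReal) < b → HasDerivAt φ (φ' x) x)
    (hφ'neg : ∀ x, a < x → (x : EReal) < b → φ' x < 0)
    (hσpos : ∀ x, a < x → (x : EReal) < b → 0 < σ x)
    (hSpos : ∀ x, a < x → (x : EReal) < b → 0 < S x)
    (hI : ∀ x, a < x → (x : EReal) < b → HasDerivAt I (I' x) x)
    (hJ : ∀ x, a < x → (x : EReal) < b → HasDerivAt J (J' x) x)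
    (hJI : ∀ x, a < x → (x : EReal) < b → J' x = -(I' x) * φ x)
    (hL : ∀ x, a < x → (x : EReal) < b →
      L x = σ x ^ 2 * (φ' x) ^ 2 * I' x / (2 * S x))
    (hLd : ∀ x, a < x → (x : EReal) < b → HasDerivAt L (L' x) x)
    (hL'pos : ∀ x, a < x → x < xstar → 0 < L' x)
    (hL'neg : ∀ x, xstar < x → (x : EReal) < b → L' x < 0)
    (hLlim : Tendsto L (comap (fun x : ℝ => (x : EReal)) (𝓝[<] b)) (𝓝 0))
    (hLneg : ∃ x₀, a < x₀ ∧ (x₀ : EReal) < b ∧ L x₀ < 0) :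
    ∃ xhat, (a < xhat ∧ xhat < xstar) ∧
      (∀ x, a < x → x < xhat → I' x < 0 ∧ 0 < J' x) ∧
      (∀ x, xhat < x → (x : EReal) < b → 0 < I' x ∧ J' x < 0) ∧
      (∀ y, (a < y ∧ y < xstar) →
        (∀ x, a < x → x < y → I' x < 0 ∧ 0 < J' x) →
        (∀ x, y < x → (x : EReal) < b → 0 < I' x ∧ J' x < 0) → y = xhat) ∧
      (∀ zstar, a < zstar → (zstar : EReal) < b →
        (∀ x, a < x → x < zstar → I x < 0) →
        (∀ x, zstar < x → (x : EReal) < b → 0 < I x) → xhat < zstar) := by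
  obtain ⟨haxs, hxsb⟩ := hxstar
  obtain ⟨x₀, hax₀, hx₀b, hLx₀⟩ := hLneg
  -- basic coercion helper
  have hcb : ∀ x : ℝ, x ≤ xstar → (x : EReal) < b := fun x hx =>
    lt_of_le_of_lt (by exact_mod_cast hx) hxsb
  -- sign transfer between L and I'
  have hLI : ∀ x, a < x → (x : EReal) < b →
      L x = (σ x ^ 2 * (φ' x) ^ 2 / (2 * S x)) * I' x := by
    intro x hx1 hx2
    rw [hL x hx1 hx2]; ring
  have hCpos : ∀ x, a < x → (x : EReal) < b →
      0 < σ x ^ 2 * (φ' x) ^ 2 / (2 * S x) := by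
    intro x hx1 hx2
    have h1 := hσpos x hx1 hx2
    have h2 := (hφ'neg x hx1 hx2).ne
    have h3 := hSpos x hx1 hx2
    positivity
  have hIpos_of : ∀ x, a < x → (x : EReal) < b → 0 < L x → 0 < I' x := by
    intro x hx1 hx2 hLx
    rw [hLI x hx1 hx2] at hLx
    by_contra h
    push_neg at h
    have hC := hCpos x hx1 hx2
    nlinarith
  have hIneg_of : ∀ x, a < x → (x : EReal) < b → L x < 0 → I' x < 0 := by
    intro x hx1 hx2 hLx
    by_contra h
    push_neg at h
    have : 0 ≤ L x := by
      rw [hLI x hx1 hx2]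
      exact mul_nonneg (hCpos x hx1 hx2).le h
    linarith
  -- filter at b is nontrivial
  haveI hF : (comap (fun x : ℝ => (x : EReal)) (𝓝[<] b)).NeBot := by
    refine comap_neBot fun t ht => ?_
    rcases (mem_nhdsLT_iff_exists_Ioo_subset' hab).1 ht with ⟨l, hl, hsub⟩
    rcases EReal.lt_iff_exists_real_btwn.1 (max_lt hl hab : max l (a : EReal) < b)
      with ⟨r, hr1, hr2⟩
    exact ⟨r, hsub ⟨lt_of_le_of_lt (le_max_left _ _) hr1, hr2⟩⟩
  -- L is nonneg to the right of xstar
  have hLnonneg : ∀ y, xstar < y → (y : EReal) < b → 0 ≤ L y := by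
    intro y hy1 hy2
    refine le_of_tendsto hLlim ?_
    have hmem : Ioo (y : EReal) b ∈ 𝓝[<] b :=
      (mem_nhdsLT_iff_exists_Ioo_subset' hy2).2 ⟨y, hy2, subset_rfl⟩
    filter_upwards [preimage_mem_comap hmem] with x hx
    obtain ⟨hx1, hx2⟩ : ((y : EReal) < (x : EReal)) ∧ ((x : EReal) < b) := hx
    have hyx : y < x := by exact_mod_cast hx1
    have hanti : StrictAntiOn L (Icc y x) := by
      refine myStrictAntiOn (f' := L') (fun z hz => ?_) (fun z hz => ?_)
      · exact hLd z (lt_of_lt_of_le (lt_trans haxs hy1) hz.1)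
          (lt_of_le_of_lt (EReal.coe_le_coe_iff.2 hz.2) hx2)
      · exact hL'neg z (lt_of_lt_of_le hy1 hz.1.le)
          (lt_trans (EReal.coe_lt_coe_iff.2 hz.2) hx2)
    exact (hanti (left_mem_Icc.2 hyx.le) ⟨hyx.le, le_refl x⟩ hyx).le
  -- L xstar is positive
  have hLxs : 0 < L xstar := by
    rcases EReal.lt_iff_exists_real_btwn.1 hxsb with ⟨z, hz1, hz2⟩
    have hz1' : xstar < z := by exact_mod_cast hz1
    have hanti : StrictAntiOn L (Icc xstar z) := by
      refine myStrictAntiOn (f' := L') (fun w hw => ?_) (fun w hw => ?_)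
      · exact hLd w (lt_of_lt_of_le haxs hw.1)
          (lt_of_le_of_lt (EReal.coe_le_coe_iff.2 hw.2) hz2)
      · exact hL'neg w hw.1 (lt_trans (EReal.coe_lt_coe_iff.2 hw.2) hz2)
    rcases exists_between hz1' with ⟨w, hw1, hw2⟩
    have hwb : (w : EReal) < b := lt_trans (by exact_mod_cast hw2) hz2
    have h1 : L w < L xstar :=
      hanti (left_mem_Icc.2 hz1'.le) ⟨hw1.le, hw2.le⟩ hw1
    exact lt_of_le_of_lt (hLnonneg w hw1 hwb) h1
  -- x₀ < xstar
  have hx₀xs : x₀ < xstar := by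
    rcases lt_trichotomy x₀ xstar with h | h | h
    · exact h
    · rw [h] at hLx₀; linarith
    · linarith [hLnonneg x₀ h hx₀b]
  -- strict monotonicity of L on intervals inside (a, xstar]
  have hmono : ∀ u v : ℝ, a < u → v ≤ xstar → StrictMonoOn L (Icc u v) := by
    intro u v hu hv
    refine myStrictMonoOn (f' := L') (fun z hz => ?_) (fun z hz => ?_)
    · exact hLd z (lt_of_lt_of_le hu hz.1) (hcb z (le_trans hz.2 hv))
    · exact hL'pos z (lt_of_lt_of_le hu hz.1.le) (lt_of_lt_of_le hz.2 hv)
  -- intermediate value: find xhat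
  have hcont : ContinuousOn L (Icc x₀ xstar) := fun z hz =>
    (hLd z (lt_of_lt_of_le hax₀ hz.1) (hcb z hz.2)).continuousAt.continuousWithinAt
  have h0mem : (0 : ℝ) ∈ Ioo (L x₀) (L xstar) := ⟨hLx₀, hLxs⟩
  obtain ⟨xhat, hxhat, hLxhat⟩ := intermediate_value_Ioo hx₀xs.le hcont h0mem
  have haxh : a < xhat := lt_trans hax₀ hxhat.1
  have hxhxs : xhat < xstar := hxhat.2
  have hxhb : (xhat : EReal) < b := hcb xhat hxhxs.le
  -- L negative to the left of xhat
  have hLleft : ∀ x, a < x → x < xhat → L x < 0 := by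
    intro x hx1 hx2
    have := hmono x xhat hx1 hxhxs.le (left_mem_Icc.2 hx2.le)
      ⟨hx2.le, le_refl xhat⟩ hx2
    rwa [hLxhat] at this
  -- L positive to the right of xhat
  have hLright : ∀ x, xhat < x → (x : EReal) < b → 0 < L x := by
    intro x hx1 hx2
    rcases le_or_gt x xstar with h | h
    · have := hmono xhat x haxh h (left_mem_Icc.2 hx1.le) ⟨hx1.le, le_refl x⟩ hx1
      rwa [hLxhat] at this
    · rcases EReal.lt_iff_exists_real_btwn.1 hx2 with ⟨z, hz1, hz2⟩
      have hz1' : x < z := by exact_mod_cast hz1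
      have hanti : StrictAntiOn L (Icc x z) := by
        refine myStrictAntiOn (f' := L') (fun w hw => ?_) (fun w hw => ?_)
        · exact hLd w (lt_of_lt_of_le (lt_trans haxs h) hw.1)
            (lt_of_le_of_lt (EReal.coe_le_coe_iff.2 hw.2) hz2)
        · exact hL'neg w (lt_of_lt_of_le h hw.1.le)
            (lt_trans (EReal.coe_lt_coe_iff.2 hw.2) hz2)
      rcases exists_between hz1' with ⟨w, hw1, hw2⟩
      have hwb : (w : EReal) < b := lt_trans (by exact_mod_cast hw2) hz2
      have h1 : L w < L x := hanti (left_mem_Icc.2 hz1'.le) ⟨hw1.le, hw2.le⟩ hw1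
      exact lt_of_le_of_lt (hLnonneg w (lt_trans h hw1) hwb) h1
  -- sign statements for I' and J'
  have hIJleft : ∀ x, a < x → x < xhat → I' x < 0 ∧ 0 < J' x := by
    intro x hx1 hx2
    have hxb : (x : EReal) < b := hcb x (hx2.le.trans hxhxs.le)
    have hIneg := hIneg_of x hx1 hxb (hLleft x hx1 hx2)
    refine ⟨hIneg, ?_⟩
    rw [hJI x hx1 hxb]
    exact mul_pos (by linarith) (hφpos x hx1 hxb)
  have hIJright : ∀ x, xhat < x → (x : EReal) < b → 0 < I' x ∧ J' x < 0 := by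
    intro x hx1 hx2
    have hx1' : a < x := lt_trans haxh hx1
    have hIpos := hIpos_of x hx1' hx2 (hLright x hx1 hx2)
    refine ⟨hIpos, ?_⟩
    rw [hJI x hx1' hx2]
    have := hφpos x hx1' hx2
    nlinarith
  refine ⟨xhat, ⟨haxh, hxhxs⟩, hIJleft, hIJright, ?_, ?_⟩
  · -- uniqueness
    intro y ⟨hay, hyxs⟩ hyl hyr
    rcases lt_trichotomy y xhat with h | h | h
    · rcases exists_between h with ⟨w, hw1, hw2⟩
      have hwb : (w : EReal) < b := hcb w (hw2.le.trans hxhxs.le)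
      have h1 := (hyr w hw1 hwb).1
      have h2 := (hIJleft w (lt_trans hay hw1) hw2).1
      linarith
    · exact h
    · rcases exists_between h with ⟨w, hw1, hw2⟩
      have hwb : (w : EReal) < b := hcb w (hw2.le.trans hyxs.le)
      have h1 := (hIJright w hw1 hwb).1
      have h2 := (hyl w (lt_trans haxh hw1) hw2).1
      linarith
  · -- comparison with zstar
    intro zstar hz1 hz2 hIneg hIpos
    by_contra hcon
    push_neg at hcon
    -- I zstar = 0 by continuity
    have hc : ContinuousAt I zstar := (hI zstar hz1 hz2).continuousAt
    have hIz_le : I zstar ≤ 0 := by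
      refine le_of_tendsto (hc.tendsto.mono_left nhdsWithin_le_nhds :
        Tendsto I (𝓝[<] zstar) (𝓝 (I zstar))) ?_
      filter_upwards [Ioo_mem_nhdsLT_of_mem (right_mem_Ioc.2 hz1)] with x hx
      exact (hIneg x hx.1 hx.2).le
    have hIz_ge : 0 ≤ I zstar := by
      rcases EReal.lt_iff_exists_real_btwn.1 hz2 with ⟨t, ht1, ht2⟩
      have ht1' : zstar < t := by exact_mod_cast ht1
      refine ge_of_tendsto (hc.tendsto.mono_left nhdsWithin_le_nhds :
        Tendsto I (𝓝[>] zstar) (𝓝 (I zstar))) ?_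
      filter_upwards [Ioo_mem_nhdsGT_of_mem (left_mem_Ico.2 ht1')] with x hx
      exact (hIpos x hx.1 (lt_trans (by exact_mod_cast hx.2) ht2)).le
    have hIz : I zstar = 0 := le_antisymm hIz_le hIz_ge
    rcases exists_between hz1 with ⟨u, hu1, hu2⟩
    have hanti : StrictAntiOn I (Icc u zstar) := by
      refine myStrictAntiOn (f' := I') (fun w hw => ?_) (fun w hw => ?_)
      · exact hI w (lt_of_lt_of_le hu1 hw.1)
          (lt_of_le_of_lt (EReal.coe_le_coe_iff.2 hw.2) hz2)
      · exact (hIJleft w (lt_of_lt_of_le hu1 hw.1.le) (lt_of_lt_of_le hw.2 hcon)).1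
    have := hanti (left_mem_Icc.2 hu2.le) ⟨hu2.le, le_refl zstar⟩ hu2
    rw [hIz] at this
    exact absurd (hIneg u hu1 hu2) (not_lt.2 this.le)
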